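/- Suppose on the interval [t-τ, t] the signals satisfy ẏ(σ) = Φ + α u(σ) where Φ is a constant. Then the algebraic estimator F_est(t) = -(6/τ³) ∫_{t-τ}^{t} [(τ - 2σ')y(t-τ+σ') + α σ'(τ - σ')u(t-τ+σ')] dσ' (with σ' the shifted time variable running from 0 to τ) recovers Φ exactly: F_est(t) = Φ. -/

import Mathlib

open intervalIntegral

theorem algebraic_estimator_exact
    (τ α Φ t : ℝ) (hτ : 0 < τ)
    (y u : ℝ → ℝ) (hu : Continuous u)
    (hder : ∀ σ ∈ Set.Icc (t - τ) t, HasDerivAt y (Φ + α * u σ) σ) :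
    -(6 / τ ^ 3) *
      (∫ s in (0:ℝ)..τ,
        ((τ - 2 * s) * y (t - τ + s) + α * s * (τ - s) * u (t - τ + s)))
      = Φ := by
  have huIcc : Set.uIcc (0:ℝ) τ = Set.Icc 0 τ := Set.uIcc_of_le hτ.le
  have hmem : ∀ s ∈ Set.Icc (0:ℝ) τ, t - τ + s ∈ Set.Icc (t - τ) t := by
    intro s hs
    constructor <;> [linarith [hs.1]; linarith [hs.2]]
  have hF : ∀ s ∈ Set.uIcc (0:ℝ) τ,
      HasDerivAt (fun s => s * (τ - s) * y (t - τ + s))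
        ((τ - 2 * s) * y (t - τ + s) + s * (τ - s) * (Φ + α * u (t - τ + s))) s := by
    intro s hs
    rw [huIcc] at hs
    have hy : HasDerivAt y (Φ + α * u (t - τ + s)) (t - τ + s) := hder _ (hmem s hs)
    have hlin : HasDerivAt (fun s : ℝ => t - τ + s) 1 s :=
      (hasDerivAt_id s).const_add (t - τ)
    have hyc : HasDerivAt (fun s => y (t - τ + s)) ((Φ + α * u (t - τ + s)) * 1) s :=
      hy.comp s hlin
    have hpoly : HasDerivAt (fun s : ℝ => s * (τ - s)) (τ - 2 * s) s := by
      have h := (hasDerivAt_id s).fun_mul ((hasDerivAt_const s τ).fun_sub (hasDerivAt_id s))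
      refine h.congr_deriv ?_
      simp [id]
      ring
    have := hpoly.fun_mul hyc
    refine this.congr_deriv ?_
    ring
  have hycont : ContinuousOn (fun s => y (t - τ + s)) (Set.Icc 0 τ) := by
    intro s hs
    have hy := hder _ (hmem s hs)
    exact ((hy.continuousAt).comp (by fun_prop : Continuous fun s : ℝ => t - τ + s).continuousAt).continuousWithinAt
  have hint : IntervalIntegrable
      (fun s => (τ - 2 * s) * y (t - τ + s) + s * (τ - s) * (Φ + α * u (t - τ + s)))
      MeasureTheory.volume 0 τ := by
    apply ContinuousOn.intervalIntegrable
    rw [huIcc]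
    apply ContinuousOn.add
    · exact (Continuous.continuousOn (by fun_prop)).mul hycont
    · fun_prop
  have hFTC : (∫ s in (0:ℝ)..τ,
      ((τ - 2 * s) * y (t - τ + s) + s * (τ - s) * (Φ + α * u (t - τ + s)))) = 0 := by
    rw [integral_eq_sub_of_hasDerivAt hF hint]
    simp
  have hsplit : ∀ s : ℝ, (τ - 2 * s) * y (t - τ + s) + α * s * (τ - s) * u (t - τ + s)
      = ((τ - 2 * s) * y (t - τ + s) + s * (τ - s) * (Φ + α * u (t - τ + s)))
        - Φ * (τ * s - s ^ 2) := by
    intro s; ring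
  have hpolyint : (∫ s in (0:ℝ)..τ, Φ * (τ * s - s ^ 2)) = Φ * (τ ^ 3 / 6) := by
    have : (∫ s in (0:ℝ)..τ, (τ * s - s ^ 2)) = τ ^ 3 / 6 := by
      rw [intervalIntegral.integral_sub ((by fun_prop : Continuous fun s : ℝ => τ * s).intervalIntegrable 0 τ)
        ((by fun_prop : Continuous fun s : ℝ => s ^ 2).intervalIntegrable 0 τ),
        intervalIntegral.integral_const_mul, integral_id, integral_pow]
      ring
    rw [intervalIntegral.integral_const_mul, this]
  have hintpoly : IntervalIntegrable (fun s : ℝ => Φ * (τ * s - s ^ 2)) MeasureTheory.volume 0 τ :=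
    (by fun_prop : Continuous fun s : ℝ => Φ * (τ * s - s ^ 2)).intervalIntegrable 0 τ
  have : (∫ s in (0:ℝ)..τ,
      ((τ - 2 * s) * y (t - τ + s) + α * s * (τ - s) * u (t - τ + s)))
      = -(Φ * (τ ^ 3 / 6)) := by
    simp_rw [hsplit]
    rw [intervalIntegral.integral_sub hint hintpoly, hFTC, hpolyint]
    ring
  rw [this]
  field_simp
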